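/- Let d_{2a+1,j} = 2(−1)^{a+j+1}(a!)²/((a+j)!(a−j)!j²) for 1 ≤ |j| ≤ a and d_{2a+1,0} = −∑_{j≠0} d_{2a+1,j}. Then ∑_{j=−a}^{a} |d_{2a+1,j}| < 4π²/3, and consequently the discrete kinetic operator T̃ = −(1/(2m h²)) ∑_{j=−a, j≠0}^{a} d_{2a+1,j} A_j (where each A_j is unitary) has operator norm at most π²/(3 m h²). -/

import Mathlib

open Real Finset

noncomputable def dcoefNZ (a j : ℤ) : ℝ :=
  2 * (-1 : ℝ) ^ (a + j + 1) * ((Nat.factorial a.toNat : ℝ))^2 /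
    ((Nat.factorial (a + j).toNat : ℝ) * (Nat.factorial (a - j).toNat : ℝ) * (j : ℝ)^2)

noncomputable def dcoefFull (a j : ℤ) : ℝ :=
  if j = 0 then -∑ i ∈ (Finset.Icc (-a) a).erase 0, dcoefNZ a i else dcoefNZ a j

lemma fact_sq_le (n p q : ℕ) (hpq : p + q = 2 * n) :
    n.factorial * n.factorial ≤ p.factorial * q.factorial := by
  have hp : p ≤ 2 * n := by omega
  have hn : n ≤ 2 * n := by omega
  have h1 := Nat.choose_mul_factorial_mul_factorial hp
  have h2 := Nat.choose_mul_factorial_mul_factorial hn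
  have hq : 2 * n - p = q := by omega
  have hn' : 2 * n - n = n := by omega
  rw [hq] at h1
  rw [hn'] at h2
  have hle : (2 * n).choose p ≤ (2 * n).choose n := by
    have := Nat.choose_le_middle p (2 * n)
    simpa [Nat.mul_div_cancel_left n (by norm_num : 0 < 2)] using this
  have hpos : 0 < (2 * n).choose n := Nat.choose_pos hn
  have : (2 * n).choose n * (n.factorial * n.factorial) ≤
      (2 * n).choose n * (p.factorial * q.factorial) := by
    calc (2 * n).choose n * (n.factorial * n.factorial)
        = (2 * n).factorial := by rw [← h2]; ring
      _ = (2 * n).choose p * (p.factorial * q.factorial) := by rw [← h1]; ring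
      _ ≤ (2 * n).choose n * (p.factorial * q.factorial) := by
          exact Nat.mul_le_mul_right _ hle
  exact Nat.le_of_mul_le_mul_left this hpos

lemma abs_dcoefNZ_le (a j : ℤ) (h1 : -a ≤ j) (h2 : j ≤ a) (h3 : j ≠ 0) :
    |dcoefNZ a j| ≤ 2 / (j : ℝ) ^ 2 := by
  set P : ℝ := (Nat.factorial (a + j).toNat : ℝ)
  set Q : ℝ := (Nat.factorial (a - j).toNat : ℝ)
  set F : ℝ := (Nat.factorial a.toNat : ℝ)
  have hP : 0 < P := by positivity
  have hQ : 0 < Q := by positivity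
  have hF : 0 < F := by positivity
  have hj : (0:ℝ) < (j:ℝ)^2 := by
    have : (j:ℝ) ≠ 0 := Int.cast_ne_zero.mpr h3
    positivity
  have hfac : F ^ 2 ≤ P * Q := by
    have hpq : (a + j).toNat + (a - j).toNat = 2 * a.toNat := by omega
    have := fact_sq_le a.toNat (a + j).toNat (a - j).toNat hpq
    have := (Nat.cast_le (α := ℝ)).mpr this
    push_cast at this
    calc F ^ 2 = F * F := sq F
      _ ≤ P * Q := this
  have habs : |dcoefNZ a j| = 2 * F ^ 2 / (P * Q * (j:ℝ)^2) := by
    unfold dcoefNZ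
    have hone : |(-1:ℝ) ^ (a + j + 1)| = 1 := by
      rcases Int.even_or_odd (a + j + 1) with he | ho
      · rw [he.neg_one_zpow]; simp
      · rw [ho.neg_one_zpow]; simp
    rw [abs_div, abs_mul, abs_mul, hone, mul_one]
    rw [abs_mul, abs_mul]
    rw [abs_of_pos hP, abs_of_pos hQ, abs_of_pos hj]
    norm_num [abs_of_pos hF, abs_of_pos (pow_pos hF 2)]
    rfl
  rw [habs]
  calc 2 * F ^ 2 / (P * Q * (j:ℝ)^2) ≤ 2 * (P * Q) / (P * Q * (j:ℝ)^2) := by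
        gcongr
    _ = 2 / (j:ℝ)^2 := by field_simp

lemma basel_bound (N : ℕ) : ∑ k ∈ Finset.Icc 1 N, (1:ℝ) / (k:ℝ)^2 < π ^ 2 / 6 := by
  have hb := hasSum_zeta_two
  have htsum : ∑' n : ℕ, (1:ℝ) / (n:ℝ)^2 = π ^ 2 / 6 := hb.tsum_eq
  have hle : ∑ k ∈ Finset.range (N + 2), (1:ℝ) / (k:ℝ)^2 ≤ π ^ 2 / 6 := by
    rw [← htsum]
    exact Summable.sum_le_tsum _ (fun i _ => by positivity) hb.summable
  have heq : ∑ k ∈ Finset.Icc 1 N, (1:ℝ) / (k:ℝ)^2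
      = ∑ k ∈ Finset.range (N + 1), (1:ℝ) / (k:ℝ)^2 := by
    apply Finset.sum_subset
    · intro k hk
      rw [Finset.mem_Icc] at hk
      rw [Finset.mem_range]
      omega
    · intro k hk hk'
      rw [Finset.mem_range] at hk
      rw [Finset.mem_Icc] at hk'
      have hk0 : k = 0 := by omega
      simp [hk0]
  rw [heq]
  have hsucc : ∑ k ∈ Finset.range (N + 2), (1:ℝ) / (k:ℝ)^2
      = ∑ k ∈ Finset.range (N + 1), (1:ℝ) / (k:ℝ)^2 + 1 / ((N:ℝ)+1)^2 := by
    rw [Finset.sum_range_succ]; push_cast; ring_nf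
  have hpos : (0:ℝ) < 1 / ((N:ℝ)+1)^2 := by positivity
  linarith

lemma sum_abs_dcoefNZ_lt (a : ℤ) (ha : 1 ≤ a) :
    ∑ j ∈ (Finset.Icc (-a) a).erase 0, |dcoefNZ a j| < 2 * π ^ 2 / 3 := by
  have hsplit : (Finset.Icc (-a) a).erase 0 = Finset.Icc (-a) (-1) ∪ Finset.Icc 1 a := by
    ext j; simp only [Finset.mem_erase, Finset.mem_Icc, Finset.mem_union]; omega
  have hdisj : Disjoint (Finset.Icc (-a) (-1)) (Finset.Icc (1:ℤ) a) := by
    rw [Finset.disjoint_left]; intro j hj hj'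
    simp only [Finset.mem_Icc] at hj hj'; omega
  have hstep : ∑ j ∈ (Finset.Icc (-a) a).erase 0, |dcoefNZ a j|
      ≤ ∑ j ∈ (Finset.Icc (-a) a).erase 0, 2 / (j:ℝ)^2 := by
    refine Finset.sum_le_sum fun j hj => ?_
    simp only [Finset.mem_erase, Finset.mem_Icc] at hj
    exact abs_dcoefNZ_le a j hj.2.1 hj.2.2 hj.1
  have hneg : ∑ j ∈ Finset.Icc (-a) (-1), 2 / (j:ℝ)^2
      = ∑ j ∈ Finset.Icc (1:ℤ) a, 2 / (j:ℝ)^2 := by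
    refine Finset.sum_nbij' (fun j => -j) (fun j => -j) ?_ ?_ ?_ ?_ ?_
    · intro j hj; simp only [Finset.mem_Icc] at hj ⊢; omega
    · intro j hj; simp only [Finset.mem_Icc] at hj ⊢; omega
    · intro j _; ring
    · intro j _; ring
    · intro j _; push_cast; ring_nf
  have hnat : ∑ j ∈ Finset.Icc (1:ℤ) a, 2 / (j:ℝ)^2
      = ∑ k ∈ Finset.Icc 1 a.toNat, 2 / (k:ℝ)^2 := by
    refine Finset.sum_nbij' (fun j => j.toNat) (fun k => (k:ℤ)) ?_ ?_ ?_ ?_ ?_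
    · intro j hj; simp only [Finset.mem_Icc] at hj ⊢; omega
    · intro k hk; simp only [Finset.mem_Icc] at hk ⊢; omega
    · intro j hj; simp only [Finset.mem_Icc] at hj
      show ((j.toNat : ℤ)) = j; omega
    · intro k hk; simp only [Finset.mem_Icc] at hk
      show ((k:ℤ).toNat) = k; omega
    · intro j hj
      simp only [Finset.mem_Icc] at hj
      show (2:ℝ) / (j:ℝ)^2 = 2 / ((j.toNat : ℕ) : ℝ)^2
      have h' : ((j.toNat : ℤ)) = j := Int.toNat_of_nonneg (by omega)
      have hc : ((j.toNat : ℕ) : ℝ) = (j : ℝ) := by exact_mod_cast congrArg (Int.cast : ℤ → ℝ) h'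
      rw [hc]
  have hbasel := basel_bound a.toNat
  have h4 : ∑ k ∈ Finset.Icc 1 a.toNat, 2 / (k:ℝ)^2
      = 2 * ∑ k ∈ Finset.Icc 1 a.toNat, (1:ℝ) / (k:ℝ)^2 := by
    rw [Finset.mul_sum]; exact Finset.sum_congr rfl fun k _ => by ring
  calc ∑ j ∈ (Finset.Icc (-a) a).erase 0, |dcoefNZ a j|
      ≤ ∑ j ∈ (Finset.Icc (-a) a).erase 0, 2 / (j:ℝ)^2 := hstep
    _ = ∑ j ∈ Finset.Icc (-a) (-1), 2 / (j:ℝ)^2 + ∑ j ∈ Finset.Icc (1:ℤ) a, 2 / (j:ℝ)^2 := by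
        rw [hsplit, Finset.sum_union hdisj]
    _ = 4 * ∑ k ∈ Finset.Icc 1 a.toNat, (1:ℝ) / (k:ℝ)^2 := by
        rw [hneg, hnat, h4]; ring
    _ < 4 * (π ^ 2 / 6) := by linarith
    _ = 2 * π ^ 2 / 3 := by ring

theorem kinetic_operator_norm_bound {E : Type*} [NormedAddCommGroup E]
    [InnerProductSpace ℂ E] [FiniteDimensional ℂ E]
    (a : ℤ) (ha : 1 ≤ a) (m h : ℝ) (hm : 0 < m) (hh : 0 < h)
    (A : ℤ → E →L[ℂ] E) (hA : ∀ j : ℤ, ∀ v : E, ‖A j v‖ = ‖v‖) :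
    (∑ j ∈ Finset.Icc (-a) a, |dcoefFull a j|) < 4 * π ^ 2 / 3 ∧
    ‖(-(1 / (2 * m * h ^ 2)) : ℂ) •
        ∑ j ∈ (Finset.Icc (-a) a).erase 0, ((dcoefNZ a j : ℝ) : ℂ) • A j‖ ≤
      π ^ 2 / (3 * m * h ^ 2) := by
  have hS := sum_abs_dcoefNZ_lt a ha
  set S := ∑ j ∈ (Finset.Icc (-a) a).erase 0, |dcoefNZ a j| with hSdef
  constructor
  · have h0mem : (0:ℤ) ∈ Finset.Icc (-a) a := by simp; omega
    rw [← Finset.sum_erase_add _ _ h0mem]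
    have hrest : ∑ j ∈ (Finset.Icc (-a) a).erase 0, |dcoefFull a j| = S := by
      refine Finset.sum_congr rfl fun j hj => ?_
      have : j ≠ 0 := (Finset.mem_erase.mp hj).1
      rw [dcoefFull, if_neg this]
    have h0 : |dcoefFull a 0| ≤ S := by
      rw [dcoefFull, if_pos rfl, abs_neg]
      exact Finset.abs_sum_le_sum_abs _ _
    rw [hrest]
    linarith
  · refine le_trans (ContinuousLinearMap.opNorm_smul_le _ _) ?_
    have hc : ‖(-(1 / (2 * (m:ℂ) * (h:ℂ) ^ 2)))‖ = 1 / (2 * m * h ^ 2) := by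
      rw [norm_neg]
      have : (1 / (2 * (m:ℂ) * (h:ℂ) ^ 2)) = ((1 / (2 * m * h ^ 2) : ℝ) : ℂ) := by
        push_cast; ring
      rw [this, Complex.norm_real, Real.norm_eq_abs, abs_of_pos (by positivity)]
    rw [hc]
    have hAle : ∀ j : ℤ, ‖A j‖ ≤ 1 := fun j =>
      (A j).opNorm_le_bound zero_le_one fun v => by rw [hA j v, one_mul]
    have hT : ‖∑ j ∈ (Finset.Icc (-a) a).erase 0, ((dcoefNZ a j : ℝ) : ℂ) • A j‖ ≤ S := by
      refine le_trans (norm_sum_le _ _) ?_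
      refine Finset.sum_le_sum fun j _ => ?_
      calc ‖((dcoefNZ a j : ℝ) : ℂ) • A j‖
          ≤ ‖((dcoefNZ a j : ℝ) : ℂ)‖ * ‖A j‖ := ContinuousLinearMap.opNorm_smul_le _ _
        _ ≤ |dcoefNZ a j| * 1 := by
            rw [Complex.norm_real, Real.norm_eq_abs]
            exact mul_le_mul_of_nonneg_left (hAle j) (abs_nonneg _)
        _ = |dcoefNZ a j| := mul_one _
    calc 1 / (2 * m * h ^ 2) * ‖∑ j ∈ (Finset.Icc (-a) a).erase 0,
          ((dcoefNZ a j : ℝ) : ℂ) • A j‖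
        ≤ 1 / (2 * m * h ^ 2) * (2 * π ^ 2 / 3) := by
          have hpos : (0:ℝ) < 1 / (2 * m * h ^ 2) := by positivity
          exact mul_le_mul_of_nonneg_left (le_trans hT hS.le) hpos.le
      _ = π ^ 2 / (3 * m * h ^ 2) := by field_simp
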